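/- Let δ be a circular semi-flower automaton with state set Q, alphabet A, initial-final state q0, and distinguished letter a whose letter map ā is a circular permutation, and suppose the set BPI of branch points going in is exactly {q0, qm} with q0 ≠ qm. Then for every letter b ∈ A, if the image of the letter map b̄ : Q → Q has exactly two elements, then that image equals {q0, qm}. -/

import Mathlib

/-- Extension of the transition function `δ : Q → A → Q` to words (lists of letters):
`δ*(q, ε) = q` and `δ*(q, a·w) = δ*(δ(q,a), w)`. -/
def deltaStar {Q A : Type*} (δ : Q → A → Q) : Q → List A → Q
  | q, [] => q
  | q, a :: w => deltaStar δ (δ q a) w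

/-- `δ` (with initial-final state `q0`) is a semi-flower automaton: every state is
accessible and coaccessible, and every cycle passes through `q0` (i.e. for every
nonempty word `w` labelling a cycle at `q`, some prefix of `w` leads from `q` to `q0`). -/
def IsSFA {Q A : Type*} (δ : Q → A → Q) (q0 : Q) : Prop :=
  (∀ q : Q, ∃ w : List A, deltaStar δ q0 w = q) ∧
  (∀ q : Q, ∃ w : List A, deltaStar δ q w = q0) ∧
  (∀ (q : Q) (w : List A), w ≠ [] → deltaStar δ q w = q →
    ∃ u : List A, u <+: w ∧ deltaStar δ q u = q0)

/-- A map `f : Q → Q` is a circular permutation if it is bijective and for all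
`p q : Q` there is `k : ℕ` with `f^[k] p = q`. -/
def IsCircularPerm {Q : Type*} (f : Q → Q) : Prop :=
  Function.Bijective f ∧ ∀ p q : Q, ∃ k : ℕ, f^[k] p = q

/-- The set of branch points going in (bpis): states that are the target of two
distinct transitions. -/
def BPI {Q A : Type*} (δ : Q → A → Q) : Set Q :=
  {q | ∃ pb₁ pb₂ : Q × A, pb₁ ≠ pb₂ ∧ δ pb₁.1 pb₁.2 = q ∧ δ pb₂.1 pb₂.2 = q}


/-- In a circular semi-flower automaton with exactly two bpis `q0` and `qm`, every
letter map whose image has exactly two elements has image `{q0, qm}`. -/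
theorem csfa_two_bpi_rank_two_letter {Q A : Type*} [Fintype Q] [Nonempty Q] [Fintype A]
    (δ : Q → A → Q) (q0 : Q) (hSFA : IsSFA δ q0)
    (a : A) (hca : IsCircularPerm (fun q => δ q a))
    (qm : Q) (hne : q0 ≠ qm) (hbpi : BPI δ = {q0, qm})
    (b : A) (hb : (Set.range (fun q => δ q b)).ncard = 2) :
    Set.range (fun q => δ q b) = {q0, qm} := by
  by_cases hba : b = a
  · subst hba
    have hsurj : Set.range (fun q => δ q b) = Set.univ :=
      Set.range_eq_univ.mpr hca.1.2
    rw [hsurj] at hb ⊢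
    have hsub : ({q0, qm} : Set Q) ⊆ Set.univ := Set.subset_univ _
    have hcard : (Set.univ : Set Q).ncard ≤ ({q0, qm} : Set Q).ncard := by
      rw [Set.ncard_pair hne, hb]
    exact (Set.eq_of_subset_of_ncard_le hsub hcard (Set.finite_univ)).symm
  · have hsub : Set.range (fun q => δ q b) ⊆ {q0, qm} := by
      rintro q ⟨p, rfl⟩
      rw [← hbpi]
      obtain ⟨p', hp'⟩ := hca.1.2 (δ p b)
      exact ⟨(p, b), (p', a), by simp [Prod.ext_iff, hba], rfl, hp'⟩
    have hcard : ({q0, qm} : Set Q).ncard ≤ (Set.range (fun q => δ q b)).ncard := by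
      rw [Set.ncard_pair hne, hb]
    exact Set.eq_of_subset_of_ncard_le hsub hcard (Set.toFinite _)
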